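/- arXiv:2102.09197 — 2 statements merged into one kernel-verified Lean document; each statement's English description precedes it below -/
import Mathlib

section
/- Let d ≥ 3 and r ≥ 1 be integers, let m = d(d−1)^{r−1}, and let X₁, …, X_m be independent random variables, each geometric(1/2) on the positive integers. Then P(max_{1≤u≤m} X_u ≤ log₂ m − log₂ log₂ m) < 1/(d(d−1)^{r−1}). -/
open MeasureTheory ProbabilityTheory
open scoped ENNReal

lemma geomLeAux {Ω : Type*} [MeasurableSpace Ω] (μ : Measure Ω) [IsProbabilityMeasure μ]
    (Y : Ω → ℕ) (hY : Measurable Y)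
    (hg : ∀ s : ℕ, 1 ≤ s → μ {ω | Y ω = s} = ((1 : ℝ≥0∞) / 2) ^ s) (k : ℕ) :
    μ (Y ⁻¹' Set.Iic k) = 1 - (2⁻¹ : ℝ≥0∞) ^ k := by
  have hcompl : (Y ⁻¹' Set.Iic k)ᶜ = ⋃ j : ℕ, Y ⁻¹' {k + 1 + j} := by
    ext ω
    simp only [Set.mem_compl_iff, Set.mem_preimage, Set.mem_Iic, not_le, Set.mem_iUnion,
      Set.mem_singleton_iff]
    constructor
    · intro h; exact ⟨Y ω - (k + 1), by omega⟩
    · rintro ⟨j, hj⟩; omega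
  have htail : μ ((Y ⁻¹' Set.Iic k)ᶜ) = (2⁻¹ : ℝ≥0∞) ^ k := by
    rw [hcompl, measure_iUnion]
    · have hj : ∀ j : ℕ, μ (Y ⁻¹' {k + 1 + j}) = (2⁻¹ : ℝ≥0∞) ^ (k + 1 + j) := by
        intro j
        have := hg (k + 1 + j) (by omega)
        simpa [Set.preimage, one_div] using this
      simp_rw [hj, pow_add]
      rw [ENNReal.tsum_mul_left, ENNReal.tsum_geometric]
      rw [ENNReal.one_sub_inv_two, inv_inv, pow_one, mul_assoc,
        ENNReal.inv_mul_cancel (by norm_num) (by norm_num), mul_one]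
    · intro i j hij
      simp only [Function.onFun, Set.disjoint_left, Set.mem_preimage, Set.mem_singleton_iff]
      intro ω h1 h2; omega
    · exact fun j => hY (measurableSet_singleton _)
  have hms : MeasurableSet (Y ⁻¹' Set.Iic k) := hY measurableSet_Iic
  have h := measure_compl hms.compl (measure_ne_top μ _)
  rw [compl_compl, measure_univ, htail] at h
  exact h


lemma realAuxStmt6 (m : ℕ) (hm3 : 3 ≤ m) (k : ℕ)
    (hkL : (k : ℝ) ≤ Real.logb 2 m - Real.logb 2 (Real.logb 2 m)) :
    (1 - (2⁻¹ : ℝ) ^ k) ^ m < (m : ℝ)⁻¹ := by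
  have hm1 : (1 : ℝ) < m := by exact_mod_cast (by omega : 1 < m)
  have hm0 : (0 : ℝ) < m := by linarith
  set a := Real.logb 2 m with ha
  have ha1 : 1 < a := by
    have h2m : (2 : ℝ) < m := by exact_mod_cast (by omega : 2 < m)
    calc (1 : ℝ) = Real.logb 2 2 := (Real.logb_self_eq_one one_lt_two).symm
      _ < a := Real.logb_lt_logb one_lt_two (by norm_num) h2m
  have ha0 : 0 < a := by linarith
  have ham : a < m := by
    have h2m : (m : ℝ) < (2 : ℝ) ^ (m : ℝ) := by
      rw [Real.rpow_natCast]
      exact_mod_cast (Nat.lt_two_pow_self : m < 2 ^ m)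
    calc a < Real.logb 2 ((2 : ℝ) ^ (m : ℝ)) := Real.logb_lt_logb one_lt_two hm0 h2m
      _ = m := Real.logb_rpow (by norm_num) (by norm_num)
  set t : ℝ := a / m with htdef
  have ht0 : 0 < t := div_pos ha0 hm0
  have ht1 : t < 1 := (div_lt_one hm0).mpr ham
  -- 2 ^ (-(L)) = t
  set L : ℝ := a - Real.logb 2 a with hL
  have hLt : (2 : ℝ) ^ (-L) = t := by
    rw [hL, neg_sub, Real.rpow_sub (by norm_num), Real.rpow_logb (by norm_num) (by norm_num) ha0,
      Real.rpow_logb (by norm_num) (by norm_num) hm0]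
  have hxt : t ≤ (2⁻¹ : ℝ) ^ k := by
    have h1 : (2⁻¹ : ℝ) ^ k = (2 : ℝ) ^ (-(k : ℝ)) := by
      rw [Real.rpow_neg (by norm_num), Real.rpow_natCast, inv_pow]
    rw [h1, ← hLt]
    exact Real.rpow_le_rpow_left_iff one_lt_two |>.mpr (by linarith)
  have hx1 : (2⁻¹ : ℝ) ^ k ≤ 1 := pow_le_one₀ (by norm_num) (by norm_num)
  have step1 : (1 - (2⁻¹ : ℝ) ^ k) ^ m ≤ (1 - t) ^ m :=
    pow_le_pow_left₀ (by linarith) (by linarith) m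
  have step2 : (1 - t) ^ m ≤ Real.exp (-t) ^ m :=
    pow_le_pow_left₀ (by linarith) (by linarith [Real.add_one_le_exp (-t)]) m
  have step3 : Real.exp (-t) ^ m = Real.exp (-a) := by
    rw [← Real.exp_nat_mul]
    congr 1
    rw [htdef]
    field_simp
  have step4 : Real.exp (-a) = (m : ℝ) ^ (-(Real.log 2)⁻¹ : ℝ) := by
    rw [Real.rpow_def_of_pos hm0]
    congr 1
    rw [ha, Real.logb]
    field_simp
  have hlog2 : 0 < Real.log 2 := Real.log_pos one_lt_two
  have step5 : (m : ℝ) ^ (-(Real.log 2)⁻¹ : ℝ) < (m : ℝ) ^ (-1 : ℝ) := by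
    apply (Real.rpow_lt_rpow_left_iff hm1).mpr
    have : (1 : ℝ) < (Real.log 2)⁻¹ := by
      rw [lt_inv_comm₀ (by norm_num) hlog2]
      calc Real.log 2 < 0.6931471808 := Real.log_two_lt_d9
        _ < 1⁻¹ := by norm_num
    linarith
  have step6 : (m : ℝ) ^ (-1 : ℝ) = (m : ℝ)⁻¹ := Real.rpow_neg_one m
  calc (1 - (2⁻¹ : ℝ) ^ k) ^ m ≤ (1 - t) ^ m := step1
    _ ≤ Real.exp (-t) ^ m := step2
    _ = Real.exp (-a) := step3
    _ = (m : ℝ) ^ (-(Real.log 2)⁻¹ : ℝ) := step4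
    _ < (m : ℝ) ^ (-1 : ℝ) := step5
    _ = (m : ℝ)⁻¹ := step6


/-- Let `d ≥ 3` and `r ≥ 1` be integers, let `m = d(d−1)^{r−1}`, and let
`X₁, …, X_m` be independent geometric(1/2) random variables on the positive integers. Then
`P(max_u X_u ≤ log₂ m − log₂ log₂ m) < 1/(d(d−1)^{r−1})`. -/
theorem stmt6 {Ω : Type*} [MeasurableSpace Ω] (μ : Measure Ω) [IsProbabilityMeasure μ]
    (d r : ℕ) (hd : 3 ≤ d) (hr : 1 ≤ r)
    (m : ℕ) (hm : m = d * (d - 1) ^ (r - 1))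
    (X : Fin m → Ω → ℕ)
    (hmeas : ∀ u, Measurable (X u))
    (hindep : iIndepFun X μ)
    (hgeom : ∀ u, ∀ s : ℕ, 1 ≤ s → μ {ω | X u ω = s} = ((1 : ℝ≥0∞) / 2) ^ s) :
    μ {ω | ((Finset.univ.sup fun u => X u ω : ℕ) : ℝ)
        ≤ Real.logb 2 m - Real.logb 2 (Real.logb 2 m)}
      < 1 / ((d : ℝ≥0∞) * ((d : ℝ≥0∞) - 1) ^ (r - 1)) := by
  have hm3 : 3 ≤ m := by
    have h1 : 1 ≤ (d - 1) ^ (r - 1) := Nat.one_le_pow _ _ (by omega)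
    calc 3 ≤ d := hd
      _ = d * 1 := (mul_one d).symm
      _ ≤ d * (d - 1) ^ (r - 1) := Nat.mul_le_mul_left d h1
      _ = m := hm.symm
  have hm1 : (1 : ℝ) < m := by exact_mod_cast (by omega : 1 < m)
  have hm0 : (0 : ℝ) < m := by linarith
  set a := Real.logb 2 (m : ℝ) with ha
  set L : ℝ := a - Real.logb 2 a with hLdef
  have ha1 : 1 < a := by
    have h2m : (2 : ℝ) < m := by exact_mod_cast (by omega : 2 < m)
    calc (1 : ℝ) = Real.logb 2 2 := (Real.logb_self_eq_one one_lt_two).symm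
      _ < a := Real.logb_lt_logb one_lt_two (by norm_num) h2m
  have ha0 : 0 < a := by linarith
  have ham : a < m := by
    have h2m : (m : ℝ) < (2 : ℝ) ^ (m : ℝ) := by
      rw [Real.rpow_natCast]
      exact_mod_cast (Nat.lt_two_pow_self : m < 2 ^ m)
    calc a < Real.logb 2 ((2 : ℝ) ^ (m : ℝ)) := Real.logb_lt_logb one_lt_two hm0 h2m
      _ = m := Real.logb_rpow (by norm_num) (by norm_num)
  have hL0 : 0 ≤ L := by
    have : Real.logb 2 a < a := by
      calc Real.logb 2 a < Real.logb 2 (m : ℝ) := Real.logb_lt_logb one_lt_two ha0 ham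
        _ = a := rfl
    simp only [hLdef]; linarith
  set k : ℕ := ⌊L⌋₊ with hk
  have hkL : (k : ℝ) ≤ L := Nat.floor_le hL0
  -- rewrite the event
  have hset : {ω | ((Finset.univ.sup fun u => X u ω : ℕ) : ℝ) ≤ L}
      = ⋂ u ∈ Finset.univ, X u ⁻¹' Set.Iic k := by
    ext ω
    simp only [Set.mem_setOf_eq, Set.mem_iInter, Set.mem_preimage, Set.mem_Iic,
      Finset.mem_univ, forall_true_left]
    rw [← Nat.le_floor_iff hL0, ← hk, Finset.sup_le_iff]
    simp
  have hprod : μ (⋂ u ∈ Finset.univ, X u ⁻¹' Set.Iic k)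
      = (1 - (2⁻¹ : ℝ≥0∞) ^ k) ^ m := by
    rw [hindep.measure_inter_preimage_eq_mul Finset.univ
      (sets := fun _ => Set.Iic k) (fun i _ => measurableSet_Iic)]
    have hone : ∀ u : Fin m, μ (X u ⁻¹' Set.Iic k) = 1 - (2⁻¹ : ℝ≥0∞) ^ k := fun u =>
      geomLeAux μ (X u) (hmeas u) (hgeom u) k
    simp_rw [hone]
    rw [Finset.prod_const, Finset.card_univ, Fintype.card_fin]
  -- RHS equals (m : ℝ≥0∞)⁻¹
  have hrhs : 1 / ((d : ℝ≥0∞) * ((d : ℝ≥0∞) - 1) ^ (r - 1)) = ((m : ℕ) : ℝ≥0∞)⁻¹ := by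
    have h1 : ((d : ℝ≥0∞) - 1) = ((d - 1 : ℕ) : ℝ≥0∞) := by
      rw [ENNReal.natCast_sub]; norm_num
    rw [h1, hm]
    push_cast
    rw [one_div]
  rw [hset, hprod, hrhs]
  -- convert to real inequality
  have hx1 : (2⁻¹ : ℝ) ^ k ≤ 1 := pow_le_one₀ (by norm_num) (by norm_num)
  have hx0 : (0:ℝ) ≤ (2⁻¹ : ℝ) ^ k := by positivity
  have hofr1 : (1 - (2⁻¹ : ℝ≥0∞) ^ k) ^ m
      = ENNReal.ofReal ((1 - (2⁻¹ : ℝ) ^ k) ^ m) := by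
    rw [ENNReal.ofReal_pow (by linarith)]
    congr 1
    rw [ENNReal.ofReal_sub _ hx0, ENNReal.ofReal_one, ENNReal.ofReal_pow (by norm_num)]
    congr 1
    rw [show ((2:ℝ)⁻¹) = ((2:ℝ))⁻¹ from rfl, ENNReal.ofReal_inv_of_pos (by norm_num)]
    norm_num
  have hofr2 : ((m : ℕ) : ℝ≥0∞)⁻¹ = ENNReal.ofReal ((m : ℝ)⁻¹) := by
    rw [ENNReal.ofReal_inv_of_pos hm0, ENNReal.ofReal_natCast]
  rw [hofr1, hofr2]
  exact (ENNReal.ofReal_lt_ofReal_iff (by positivity)).mpr (realAuxStmt6 m hm3 k hkL)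
end

section
/- Let H and G be finite simple graphs on the same vertex set of size n ≥ 2, suppose every vertex of H has degree at most d where d ≥ 4, and suppose that for a fixed integer k ≥ 1 every edge {u,w} of G satisfies dist_H(u,w) ≤ k. Let 0 < δ ≤ 1 and set a = δ/(10·k·log₂(d−1)). Then for every set Bad of vertices with |Bad| ≤ 2n^{1−δ}, the number of vertices v with dist_G(v, Bad) ≤ a·log₂ n is at most 2(d−1)·n^{1−9δ/10}. -/
open SimpleGraph Finset


open SimpleGraph Finset

lemma pred_exists {V : Type*} {H : SimpleGraph V} {u w : V} {s : ℕ} (hr : H.Reachable u w)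
    (hs : H.dist u w = s + 1) : ∃ x, H.Adj u x ∧ H.Reachable x w ∧ H.dist x w = s := by
  obtain ⟨p, hp⟩ := hr.exists_walk_length_eq_dist
  rw [hs] at hp
  cases p with
  | nil => simp at hp
  | cons h q =>
    rename_i x
    refine ⟨x, h, q.reachable, le_antisymm ?_ ?_⟩
    · have := dist_le q
      simp [Walk.length_cons] at hp
      omega
    · by_contra hlt
      push_neg at hlt
      obtain ⟨q', hq'⟩ := q.reachable.exists_walk_length_eq_dist
      have := dist_le (Walk.cons h q')
      simp [Walk.length_cons, hq'] at this
      omega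

lemma ball_bound {V : Type*} [Fintype V] (H : SimpleGraph V) [DecidableRel H.Adj]
    {d : ℕ} (hd : 4 ≤ d) (hdeg : ∀ v, H.degree v ≤ d) (w : V) (t : ℕ) :
    ({v | H.Reachable v w ∧ H.dist v w ≤ t}).ncard ≤ 2 * (d-1)^t := by
  classical
  set Sph : ℕ → Finset V := fun s => univ.filter (fun v => H.Reachable v w ∧ H.dist v w = s)
    with hSph
  set f : ℕ → V → V := fun s v =>
    if h : ∃ x, H.Adj v x ∧ H.Reachable x w ∧ H.dist x w = s then h.choose else v with hfdef
  have hf : ∀ s v, v ∈ Sph (s+1) → H.Adj v (f s v) ∧ f s v ∈ Sph s := by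
    intro s v hv
    simp only [hSph, mem_filter, mem_univ, true_and] at hv
    have hex := pred_exists hv.1 hv.2
    simp only [hfdef, dif_pos hex]
    obtain ⟨h1, h2, h3⟩ := hex.choose_spec
    exact ⟨h1, by simp [hSph, mem_filter, h2, h3]⟩
  have claimB : ∀ s, (Sph (s+2)).card ≤ (d-1) * (Sph (s+1)).card := by
    intro s
    rw [Finset.card_eq_sum_card_fiberwise (f := f (s+1)) (t := Sph (s+1))
      (fun v hv => (hf (s+1) v hv).2)]
    have hfib : ∀ u ∈ Sph (s+1),
        ((Sph (s+2)).filter (fun v => f (s+1) v = u)).card ≤ d - 1 := by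
      intro u hu
      have hfu := hf s u hu
      have hsub : (Sph (s+2)).filter (fun v => f (s+1) v = u) ⊆
          (H.neighborFinset u).erase (f s u) := by
        intro v hv
        simp only [mem_filter] at hv
        obtain ⟨hv2, hfv⟩ := hv
        have hadj := (hf (s+1) v hv2).1
        rw [hfv] at hadj
        refine Finset.mem_erase.2 ⟨?_, ?_⟩
        · rintro rfl
          simp only [hSph, mem_filter, mem_univ, true_and] at hv2
          have := hfu.2
          simp only [hSph, mem_filter, mem_univ, true_and] at this
          omega
        · rw [mem_neighborFinset]; exact hadj.symm
      calc ((Sph (s+2)).filter (fun v => f (s+1) v = u)).card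
          ≤ ((H.neighborFinset u).erase (f s u)).card := Finset.card_le_card hsub
        _ = (H.neighborFinset u).card - 1 :=
            Finset.card_erase_of_mem (by rw [mem_neighborFinset]; exact hfu.1)
        _ ≤ d - 1 := by have := hdeg u; rw [← card_neighborFinset_eq_degree] at this; omega
    calc ∑ u ∈ Sph (s+1), ((Sph (s+2)).filter (fun v => f (s+1) v = u)).card
        ≤ ∑ _u ∈ Sph (s+1), (d-1) := Finset.sum_le_sum hfib
      _ = (Sph (s+1)).card * (d-1) := by rw [Finset.sum_const, smul_eq_mul]
      _ = (d-1) * (Sph (s+1)).card := mul_comm _ _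
  have claim1 : (Sph 1).card ≤ d := by
    have hsub : Sph 1 ⊆ H.neighborFinset w := by
      intro v hv
      simp only [hSph, mem_filter, mem_univ, true_and] at hv
      rw [mem_neighborFinset]
      exact (dist_eq_one_iff_adj.mp hv.2).symm
    calc (Sph 1).card ≤ (H.neighborFinset w).card := Finset.card_le_card hsub
      _ ≤ d := by rw [card_neighborFinset_eq_degree]; exact hdeg w
  have claimC : ∀ s, (Sph (s+1)).card ≤ d * (d-1)^s := by
    intro s
    induction s with
    | zero => simpa using claim1
    | succ m ih =>
      calc (Sph (m+2)).card ≤ (d-1) * (Sph (m+1)).card := claimB m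
        _ ≤ (d-1) * (d * (d-1)^m) := Nat.mul_le_mul_left _ ih
        _ = d * (d-1)^(m+1) := by ring
  -- ball
  have hball : ∀ t, (univ.filter (fun v => H.Reachable v w ∧ H.dist v w ≤ t)).card
      ≤ 2 * (d-1)^t := by
    intro t
    induction t with
    | zero =>
      have hsub : univ.filter (fun v => H.Reachable v w ∧ H.dist v w ≤ 0) ⊆ {w} := by
        intro v hv
        simp only [mem_filter, mem_univ, true_and] at hv
        have : H.dist v w = 0 := by omega
        rw [Finset.mem_singleton]
        exact hv.1.dist_eq_zero_iff.mp this
      have := Finset.card_le_card hsub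
      simpa using this.trans (by norm_num)
    | succ m ih =>
      have hsub : univ.filter (fun v => H.Reachable v w ∧ H.dist v w ≤ m+1) ⊆
          (univ.filter (fun v => H.Reachable v w ∧ H.dist v w ≤ m)) ∪ Sph (m+1) := by
        intro v hv
        simp only [mem_filter, mem_univ, true_and, hSph, Finset.mem_union] at hv ⊢
        obtain ⟨h1, h2⟩ := hv
        by_cases hm : H.dist v w ≤ m
        · exact Or.inl ⟨h1, hm⟩
        · exact Or.inr ⟨h1, by omega⟩
      calc (univ.filter (fun v => H.Reachable v w ∧ H.dist v w ≤ m+1)).card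
          ≤ _ := Finset.card_le_card hsub
        _ ≤ _ + _ := Finset.card_union_le _ _
        _ ≤ 2 * (d-1)^m + d * (d-1)^m := Nat.add_le_add ih (claimC m)
        _ ≤ 2 * (d-1)^(m+1) := by
            have h1 : 2 + d ≤ 2 * (d-1) := by omega
            calc 2 * (d-1)^m + d * (d-1)^m = (2+d) * (d-1)^m := by ring
              _ ≤ (2*(d-1)) * (d-1)^m := Nat.mul_le_mul_right _ h1
              _ = 2 * (d-1)^(m+1) := by ring
  rw [Set.ncard_eq_toFinset_card', Set.toFinset_setOf]
  exact hball t

lemma walk_dist_le {V : Type*} {H G : SimpleGraph V} {k : ℕ}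
    (hGH : ∀ u w, G.Adj u w → H.Reachable u w ∧ H.dist u w ≤ k)
    {v w : V} (p : G.Walk v w) : H.Reachable v w ∧ H.dist v w ≤ k * p.length := by
  induction p with
  | nil => exact ⟨Reachable.refl _, by simp⟩
  | cons h q ih =>
    rename_i x y z
    obtain ⟨hr1, hd1⟩ := hGH _ _ h
    obtain ⟨hr2, hd2⟩ := ih
    refine ⟨hr1.trans hr2, ?_⟩
    obtain ⟨p1, hp1⟩ := hr1.exists_walk_length_eq_dist
    obtain ⟨p2, hp2⟩ := hr2.exists_walk_length_eq_dist
    have tri : H.dist x z ≤ H.dist x y + H.dist y z := by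
      calc H.dist x z ≤ (p1.append p2).length := dist_le _
        _ = _ := by rw [Walk.length_append, hp1, hp2]
    simp only [Walk.length_cons]
    have : k * (q.length + 1) = k * q.length + k := by ring
    omega



/-- Let `H` and `G` be finite simple graphs on the same vertex set of size
`n ≥ 2`, suppose every vertex of `H` has degree at most `d` where `d ≥ 4`, and suppose that for a
fixed integer `k ≥ 1` every edge `{u,w}` of `G` satisfies `dist_H(u,w) ≤ k`. Let `0 < δ ≤ 1` and
set `a = δ/(10·k·log₂(d−1))`. Then for every set `Bad` of vertices with `|Bad| ≤ 2n^{1−δ}`, the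
number of vertices `v` with `dist_G(v, Bad) ≤ a·log₂ n` is at most `2(d−1)·n^{1−9δ/10}`. -/
theorem stmt16 {V : Type*} [Fintype V] (H G : SimpleGraph V) [DecidableRel H.Adj]
    (n d k : ℕ) (hn : Fintype.card V = n) (hn2 : 2 ≤ n) (hd : 4 ≤ d) (hk : 1 ≤ k)
    (hdeg : ∀ v, H.degree v ≤ d)
    (hGH : ∀ u w, G.Adj u w → H.Reachable u w ∧ H.dist u w ≤ k)
    (δ : ℝ) (hδ0 : 0 < δ) (hδ1 : δ ≤ 1)
    (a : ℝ) (ha : a = δ / (10 * k * Real.logb 2 ((d : ℝ) - 1)))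
    (Bad : Set V) (hBad : (Bad.ncard : ℝ) ≤ 2 * (n : ℝ) ^ ((1 : ℝ) - δ)) :
    ({v | ∃ w ∈ Bad, G.Reachable v w ∧ (G.dist v w : ℝ) ≤ a * Real.logb 2 n}.ncard : ℝ)
      ≤ 2 * ((d : ℝ) - 1) * (n : ℝ) ^ (1 - 9 * δ / 10) := by
  classical
  have hd1R : (3:ℝ) ≤ (d:ℝ) - 1 := by
    have : (4:ℝ) ≤ d := by exact_mod_cast hd
    linarith
  have hL : 0 < Real.logb 2 ((d:ℝ) - 1) := Real.logb_pos one_lt_two (by linarith)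
  have hnR : (2:ℝ) ≤ (n:ℝ) := by exact_mod_cast hn2
  have hn0 : (0:ℝ) < n := by linarith
  have hlogn : (1:ℝ) ≤ Real.logb 2 n := by
    have := Real.logb_le_logb_of_le (b := 2) one_lt_two two_pos hnR
    simpa using this
  have hkR : (0:ℝ) < k := by exact_mod_cast hk
  have ha0 : 0 < a := by
    rw [ha]
    positivity
  set r := ⌊a * Real.logb 2 n⌋₊ with hrdef
  have hsubset : {v | ∃ w ∈ Bad, G.Reachable v w ∧ (G.dist v w : ℝ) ≤ a * Real.logb 2 n}.toFinset
      ⊆ Bad.toFinset.biUnion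
        (fun w => univ.filter (fun v => H.Reachable v w ∧ H.dist v w ≤ k * r)) := by
    intro v hv
    rw [Set.mem_toFinset] at hv
    obtain ⟨w, hw, hreach, hdist⟩ := hv
    have hdr : G.dist v w ≤ r := Nat.le_floor hdist
    obtain ⟨p, hp⟩ := hreach.exists_walk_length_eq_dist
    obtain ⟨hHr, hHd⟩ := walk_dist_le hGH p
    rw [Finset.mem_biUnion]
    refine ⟨w, Set.mem_toFinset.2 hw, ?_⟩
    simp only [mem_filter, mem_univ, true_and]
    refine ⟨hHr, ?_⟩
    calc H.dist v w ≤ k * p.length := hHd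
      _ = k * G.dist v w := by rw [hp]
      _ ≤ k * r := Nat.mul_le_mul_left _ hdr
  have hcard : ({v | ∃ w ∈ Bad, G.Reachable v w ∧
      (G.dist v w : ℝ) ≤ a * Real.logb 2 n}.ncard : ℕ)
      ≤ Bad.ncard * (2 * (d-1)^(k*r)) := by
    rw [Set.ncard_eq_toFinset_card', Set.ncard_eq_toFinset_card']
    calc _ ≤ _ := Finset.card_le_card hsubset
      _ ≤ ∑ w ∈ Bad.toFinset,
          (univ.filter (fun v => H.Reachable v w ∧ H.dist v w ≤ k * r)).card :=
            Finset.card_biUnion_le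
      _ ≤ ∑ _w ∈ Bad.toFinset, (2 * (d-1)^(k*r)) := by
          refine Finset.sum_le_sum fun w _ => ?_
          have := ball_bound H hd hdeg w (k*r)
          rwa [Set.ncard_eq_toFinset_card', Set.toFinset_setOf] at this
      _ = Bad.toFinset.card * (2 * (d-1)^(k*r)) := by rw [Finset.sum_const, smul_eq_mul]
  -- real estimates
  have hpow : (((d-1:ℕ):ℝ))^(k*r) ≤ (n:ℝ) ^ (δ/10 : ℝ) := by
    have hcast : ((d-1:ℕ):ℝ) = (d:ℝ) - 1 := by
      have : (1:ℕ) ≤ d := by omega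
      push_cast [this]; ring
    rw [hcast]
    set x : ℝ := (d:ℝ) - 1 with hx
    have hx0 : (0:ℝ) < x := by linarith
    have key : ((k*r : ℕ):ℝ) * Real.logb 2 x ≤ (δ/10) * Real.logb 2 n := by
      have hr_le : (r:ℝ) ≤ a * Real.logb 2 n := Nat.floor_le (by positivity)
      have hkr : ((k*r:ℕ):ℝ) ≤ (k:ℝ) * (a * Real.logb 2 n) := by
        push_cast
        have : (0:ℝ) ≤ (k:ℝ) := le_of_lt hkR
        nlinarith
      have hkaL : (k:ℝ) * a * Real.logb 2 x = δ/10 := by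
        rw [ha, hx]
        field_simp [show Real.logb 2 ((d:ℝ)-1) ≠ 0 from ne_of_gt hL]
      calc ((k*r:ℕ):ℝ) * Real.logb 2 x ≤ (k:ℝ) * (a * Real.logb 2 n) * Real.logb 2 x := by
            apply mul_le_mul_of_nonneg_right hkr (le_of_lt hL)
        _ = ((k:ℝ) * a * Real.logb 2 x) * Real.logb 2 n := by ring
        _ = (δ/10) * Real.logb 2 n := by rw [hkaL]
    calc x ^ (k*r) = x ^ ((k*r : ℕ):ℝ) := by rw [Real.rpow_natCast]
      _ = (2:ℝ) ^ (((k*r : ℕ):ℝ) * Real.logb 2 x) := by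
          rw [mul_comm (((k*r : ℕ):ℝ)) (Real.logb 2 x), Real.rpow_mul (by norm_num : (0:ℝ) ≤ 2),
            Real.rpow_logb two_pos (by norm_num) hx0]
      _ ≤ (2:ℝ) ^ ((δ/10) * Real.logb 2 n) := by
          apply Real.rpow_le_rpow_of_exponent_le (by norm_num) key
      _ = (n:ℝ) ^ (δ/10 : ℝ) := by
          rw [mul_comm (δ/10 : ℝ) (Real.logb 2 n), Real.rpow_mul (by norm_num : (0:ℝ) ≤ 2),
            Real.rpow_logb two_pos (by norm_num) hn0]
  have hfinal : (({v | ∃ w ∈ Bad, G.Reachable v w ∧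
      (G.dist v w : ℝ) ≤ a * Real.logb 2 n}.ncard : ℝ))
      ≤ (2 * (n:ℝ)^((1:ℝ)-δ)) * (2 * (n:ℝ)^(δ/10:ℝ)) := by
    calc (({v | ∃ w ∈ Bad, G.Reachable v w ∧
        (G.dist v w : ℝ) ≤ a * Real.logb 2 n}.ncard : ℝ))
        ≤ (Bad.ncard : ℝ) * (2 * ((d-1:ℕ):ℝ)^(k*r)) := by exact_mod_cast hcard
      _ ≤ (2 * (n:ℝ)^((1:ℝ)-δ)) * (2 * (n:ℝ)^(δ/10:ℝ)) := by
          apply mul_le_mul hBad ?_ (by positivity) (by positivity)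
          have h2 : (0:ℝ) ≤ 2 := by norm_num
          nlinarith [hpow]
  calc (({v | ∃ w ∈ Bad, G.Reachable v w ∧
      (G.dist v w : ℝ) ≤ a * Real.logb 2 n}.ncard : ℝ))
      ≤ (2 * (n:ℝ)^((1:ℝ)-δ)) * (2 * (n:ℝ)^(δ/10:ℝ)) := hfinal
    _ = 4 * (n:ℝ)^(1 - 9*δ/10) := by
        rw [show (1 - 9*δ/10 : ℝ) = (1-δ) + δ/10 by ring, Real.rpow_add hn0]
        ring
    _ ≤ 2 * ((d:ℝ)-1) * (n:ℝ)^(1 - 9*δ/10) := by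
        have hp : (0:ℝ) < (n:ℝ)^(1 - 9*δ/10 : ℝ) := by positivity
        nlinarith
end
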